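/- Discrete L∞ bound (Lemma 3.1): for every n with 0 ≤ n ≤ M+1 (so that n·Δt ≤ T), the solution of the scheme satisfies ‖uⁿ‖_∞ ≤ e^{γT}·(‖u⁰‖_∞ + A + B). -/

import Mathlib

/-- Discrete L∞ bound (Lemma 3.1): for every `n ≤ M + 1` (so that `n Δt ≤ T`),
the solution of the finite difference scheme for the Ostrovsky--Hunter equation
satisfies `‖uⁿ‖_∞ ≤ e^{γT} (‖u⁰‖_∞ + A + B)`, where `A`, `B` bound the boundary
values. Here `u n j` denotes `u_jⁿ`. -/
theorem stmt_1 (N M : ℕ) (hN : 2 ≤ N) (T γ Δx Δt lam : ℝ)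
    (hT : 0 < T) (hγ : 0 < γ)
    (hΔx : Δx = 1 / N) (hΔt : Δt = T / (M + 1)) (hlam : lam = Δt / Δx)
    (F₁ F₂ : ℝ → ℝ) (hF₁ : ContDiff ℝ 1 F₁) (hF₂ : ContDiff ℝ 1 F₂)
    (hmono₁ : ∀ w, 0 ≤ deriv F₁ w) (hmono₂ : ∀ w, deriv F₂ w ≤ 0)
    (hCFL : ∀ w, lam * (deriv F₁ w - deriv F₂ w) ≤ 1)
    (u : ℕ → ℕ → ℝ) (P : ℕ → ℕ → ℝ)
    (hP : ∀ n j, P n j = Δx * (u n 0 / 2 + ∑ i ∈ Finset.Ico 1 j, u n i + u n j / 2))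
    (hscheme : ∀ n, n ≤ M → ∀ j, 1 ≤ j → j ≤ N - 1 →
      u (n + 1) j = u n j
        - lam * ((F₁ (u n j) + F₂ (u n (j + 1))) - (F₁ (u n (j - 1)) + F₂ (u n j)))
        + γ * Δt * P n j)
    (A B : ℝ) (hA : 0 ≤ A) (hB : 0 ≤ B)
    (hbdL : ∀ n, n ≤ M + 1 → |u n 0| ≤ A)
    (hbdR : ∀ n, n ≤ M + 1 → |u n N| ≤ B) :
    ∀ n, n ≤ M + 1 →
      (Finset.range (N + 1)).sup' Finset.nonempty_range_add_one (fun j => |u n j|)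
        ≤ Real.exp (γ * T) *
          ((Finset.range (N + 1)).sup' Finset.nonempty_range_add_one (fun j => |u 0 j|)
            + A + B) := by
  -- abbreviation for the discrete sup norm
  set K : ℕ → ℝ := fun n =>
    (Finset.range (N + 1)).sup' Finset.nonempty_range_add_one (fun j => |u n j|) with hKdef
  have hNpos : (0:ℝ) < (N:ℝ) := by
    have : (2:ℝ) ≤ (N:ℝ) := by exact_mod_cast hN
    linarith
  have hΔxpos : 0 < Δx := by rw [hΔx]; positivity
  have hΔtpos : 0 < Δt := by rw [hΔt]; positivity
  have hlampos : 0 < lam := by rw [hlam]; positivity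
  have hF₁d : Differentiable ℝ F₁ := hF₁.differentiable one_ne_zero
  have hF₂d : Differentiable ℝ F₂ := hF₂.differentiable one_ne_zero
  have hF₁mono : Monotone F₁ := by
    apply monotone_of_deriv_nonneg hF₁d hmono₁
  have hF₂anti : Antitone F₂ := by
    apply antitone_of_deriv_nonpos hF₂d hmono₂
  have hg : Monotone (fun w => w - lam * (F₁ w - F₂ w)) := by
    apply monotone_of_deriv_nonneg
    · exact differentiable_id.sub ((hF₁d.sub hF₂d).const_mul lam)
    · intro x
      have h1 : HasDerivAt (fun w => w - lam * (F₁ w - F₂ w))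
          (1 - lam * (deriv F₁ x - deriv F₂ x)) x :=
        (hasDerivAt_id x).sub ((((hF₁d x).hasDerivAt).sub ((hF₂d x).hasDerivAt)).const_mul lam)
      rw [h1.deriv]
      linarith [hCFL x]
  -- key stencil bound
  have key : ∀ (a b c Kv : ℝ), |a| ≤ Kv → |b| ≤ Kv → |c| ≤ Kv →
      |b - lam * ((F₁ b + F₂ c) - (F₁ a + F₂ b))| ≤ Kv := by
    intro a b c Kv ha hb hc
    rw [abs_le] at ha hb hc ⊢
    constructor
    · have h1 : F₁ (-Kv) ≤ F₁ a := hF₁mono ha.1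
      have h2 : F₂ c ≤ F₂ (-Kv) := hF₂anti hc.1
      have h3 : (-Kv) - lam * (F₁ (-Kv) - F₂ (-Kv)) ≤ b - lam * (F₁ b - F₂ b) := hg hb.1
      have h4 : lam * F₁ (-Kv) ≤ lam * F₁ a := mul_le_mul_of_nonneg_left h1 hlampos.le
      have h5 : lam * F₂ c ≤ lam * F₂ (-Kv) := mul_le_mul_of_nonneg_left h2 hlampos.le
      nlinarith
    · have h1 : F₁ a ≤ F₁ Kv := hF₁mono ha.2
      have h2 : F₂ Kv ≤ F₂ c := hF₂anti hc.2
      have h3 : b - lam * (F₁ b - F₂ b) ≤ Kv - lam * (F₁ Kv - F₂ Kv) := hg hb.2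
      have h4 : lam * F₁ a ≤ lam * F₁ Kv := mul_le_mul_of_nonneg_left h1 hlampos.le
      have h5 : lam * F₂ Kv ≤ lam * F₂ c := mul_le_mul_of_nonneg_left h2 hlampos.le
      nlinarith
  have hmemK : ∀ m i, i ≤ N → |u m i| ≤ K m := by
    intro m i hi
    exact Finset.le_sup' (fun j => |u m j|) (Finset.mem_range.mpr (by omega))
  have hKnn : ∀ m, 0 ≤ K m := fun m => (abs_nonneg _).trans (hmemK m 0 (by omega))
  -- bound on the primitive term
  have hPbound : ∀ m j, 1 ≤ j → j ≤ N - 1 → |P m j| ≤ K m := by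
    intro m j hj1 hj2
    rw [hP]
    rw [abs_mul, abs_of_pos hΔxpos]
    have hsum : |∑ i ∈ Finset.Ico 1 j, u m i| ≤ (j - 1 : ℕ) * K m := by
      calc |∑ i ∈ Finset.Ico 1 j, u m i| ≤ ∑ i ∈ Finset.Ico 1 j, |u m i| :=
            Finset.abs_sum_le_sum_abs _ _
        _ ≤ ∑ i ∈ Finset.Ico 1 j, K m := by
            apply Finset.sum_le_sum
            intro i hi
            rw [Finset.mem_Ico] at hi
            exact hmemK m i (by omega)
        _ = (j - 1 : ℕ) * K m := by
            rw [Finset.sum_const, Nat.card_Ico, nsmul_eq_mul]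
    have h0 : |u m 0| ≤ K m := hmemK m 0 (by omega)
    have hjb : |u m j| ≤ K m := hmemK m j (by omega)
    have habs : |u m 0 / 2 + ∑ i ∈ Finset.Ico 1 j, u m i + u m j / 2|
        ≤ (j : ℕ) * K m := by
      have hcast : ((j - 1 : ℕ) : ℝ) = (j : ℝ) - 1 := by
        have : (1:ℕ) ≤ j := hj1
        push_cast [this]
        ring
      calc |u m 0 / 2 + ∑ i ∈ Finset.Ico 1 j, u m i + u m j / 2|
          ≤ |u m 0 / 2 + ∑ i ∈ Finset.Ico 1 j, u m i| + |u m j / 2| := abs_add_le _ _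
        _ ≤ |u m 0 / 2| + |∑ i ∈ Finset.Ico 1 j, u m i| + |u m j / 2| := by
            linarith [abs_add_le (u m 0 / 2) (∑ i ∈ Finset.Ico 1 j, u m i)]
        _ ≤ K m / 2 + ((j - 1 : ℕ) * K m) + K m / 2 := by
            rw [abs_div, abs_div]
            simp only [abs_two]
            linarith
        _ = (j : ℕ) * K m := by rw [hcast]; ring
    calc Δx * |u m 0 / 2 + ∑ i ∈ Finset.Ico 1 j, u m i + u m j / 2|
        ≤ Δx * ((j:ℕ) * K m) := mul_le_mul_of_nonneg_left habs hΔxpos.le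
      _ ≤ Δx * ((N:ℝ) * K m) := by
          apply mul_le_mul_of_nonneg_left _ hΔxpos.le
          apply mul_le_mul_of_nonneg_right _ (hKnn m)
          exact_mod_cast Nat.cast_le.mpr (by omega : j ≤ N)
      _ = K m := by
          rw [hΔx]
          field_simp
  -- the main inductive bound
  set S : ℝ := K 0 + A + B with hSdef
  have hSnn : 0 ≤ S := by have := hKnn 0; simp only [hSdef]; linarith
  have honele : (1:ℝ) ≤ 1 + γ * Δt := by nlinarith
  have main : ∀ m, m ≤ M + 1 → K m ≤ (1 + γ * Δt) ^ m * S := by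
    intro m
    induction m with
    | zero =>
        intro _
        simp only [pow_zero, one_mul, hSdef]
        have := hKnn 0
        linarith
    | succ n ih =>
        intro hle
        have hnM : n ≤ M := by omega
        have ihn := ih (by omega)
        have hpow1 : (1:ℝ) ≤ (1 + γ * Δt) ^ (n + 1) := one_le_pow₀ honele
        have hpownn : (0:ℝ) ≤ (1 + γ * Δt) ^ n := by positivity
        apply Finset.sup'_le
        intro j hj
        rw [Finset.mem_range] at hj
        rcases eq_or_ne j 0 with rfl | hj0
        · have := hbdL (n+1) (by omega)
          have hAS : A ≤ S := by have := hKnn 0; simp only [hSdef]; linarith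
          calc |u (n+1) 0| ≤ A := this
            _ ≤ S := hAS
            _ = 1 * S := (one_mul S).symm
            _ ≤ (1 + γ * Δt) ^ (n + 1) * S := mul_le_mul_of_nonneg_right hpow1 hSnn
        · rcases eq_or_ne j N with hjN | hjN
          · have := hbdR (n+1) (by omega)
            have hBS : B ≤ S := by have := hKnn 0; simp only [hSdef]; linarith
            rw [hjN]
            calc |u (n+1) N| ≤ B := this
              _ ≤ S := hBS
              _ = 1 * S := (one_mul S).symm
              _ ≤ (1 + γ * Δt) ^ (n + 1) * S := mul_le_mul_of_nonneg_right hpow1 hSnn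
          · have hj1 : 1 ≤ j := by omega
            have hj2 : j ≤ N - 1 := by omega
            rw [hscheme n hnM j hj1 hj2]
            have hstencil : |u n j - lam * ((F₁ (u n j) + F₂ (u n (j+1)))
                - (F₁ (u n (j-1)) + F₂ (u n j)))| ≤ K n :=
              key _ _ _ _ (hmemK n (j-1) (by omega)) (hmemK n j (by omega))
                (hmemK n (j+1) (by omega))
            have hPb : |P n j| ≤ K n := hPbound n j hj1 hj2
            calc |u n j - lam * ((F₁ (u n j) + F₂ (u n (j+1)))
                  - (F₁ (u n (j-1)) + F₂ (u n j))) + γ * Δt * P n j|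
                ≤ |u n j - lam * ((F₁ (u n j) + F₂ (u n (j+1)))
                  - (F₁ (u n (j-1)) + F₂ (u n j)))| + |γ * Δt * P n j| := abs_add_le _ _
              _ ≤ K n + γ * Δt * K n := by
                  have : |γ * Δt * P n j| = γ * Δt * |P n j| := by
                    rw [abs_mul, abs_of_pos (by positivity : (0:ℝ) < γ * Δt)]
                  rw [this] at *
                  have := mul_le_mul_of_nonneg_left hPb (by positivity : (0:ℝ) ≤ γ * Δt)
                  linarith [hstencil]
              _ = (1 + γ * Δt) * K n := by ring
              _ ≤ (1 + γ * Δt) * ((1 + γ * Δt) ^ n * S) :=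
                  mul_le_mul_of_nonneg_left ihn (by linarith)
              _ = (1 + γ * Δt) ^ (n + 1) * S := by ring
  -- conclude with the exponential bound
  intro n hn
  have h1 : K n ≤ (1 + γ * Δt) ^ n * S := main n hn
  have h2 : (1 + γ * Δt) ^ n ≤ Real.exp (γ * Δt) ^ n := by
    apply pow_le_pow_left₀ (by positivity)
    linarith [Real.add_one_le_exp (γ * Δt)]
  have h3 : Real.exp (γ * Δt) ^ n = Real.exp (n * (γ * Δt)) := by
    rw [← Real.exp_nat_mul]
  have h4 : (n:ℝ) * (γ * Δt) ≤ γ * T := by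
    rw [hΔt]
    have hn' : (n:ℝ) ≤ (M:ℝ) + 1 := by exact_mod_cast hn
    have hM1 : (0:ℝ) < (M:ℝ) + 1 := by positivity
    rw [div_eq_mul_inv]
    have : (n:ℝ) * (γ * (T * ((M:ℝ)+1)⁻¹)) = γ * T * ((n:ℝ) / ((M:ℝ)+1)) := by
      field_simp
    rw [this]
    have hfrac : (n:ℝ) / ((M:ℝ)+1) ≤ 1 := by
      rw [div_le_one hM1]; exact hn'
    have hγT : 0 ≤ γ * T := by positivity
    nlinarith
  have h5 : Real.exp ((n:ℝ) * (γ * Δt)) ≤ Real.exp (γ * T) := Real.exp_le_exp.mpr h4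
  calc K n ≤ (1 + γ * Δt) ^ n * S := h1
    _ ≤ Real.exp (γ * T) * S := by
        apply mul_le_mul_of_nonneg_right _ hSnn
        calc (1 + γ * Δt) ^ n ≤ Real.exp (γ * Δt) ^ n := h2
          _ = Real.exp ((n:ℝ) * (γ * Δt)) := h3
          _ ≤ Real.exp (γ * T) := h5
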